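/- Let T× be a finite forest poset. The pointwise intersection of two ornamentations of T× is an ornamentation: if ρ and ρ′ are ornamentations, then v ↦ ρ(v) ∩ ρ′(v) is an ornamentation. -/

import Mathlib

/-- The Hasse diagram of a partial order, as a simple graph: `a` and `b` are adjacent
when one covers the other. For a rooted tree poset this is the underlying tree. -/
def hasseGraph (V : Type*) [PartialOrder V] : SimpleGraph V where
  Adj a b := a ⋖ b ∨ b ⋖ a
  symm := ⟨fun a b h => h.symm⟩
  loopless := by
    constructor
    intro a h
    rcases h with h | h <;> exact absurd h.lt (lt_irrefl a)

/-- `S` is an ornament of the forest poset `V` hung at `v`: a subset inducing a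
connected subgraph of the forest (= Hasse diagram) whose unique minimal element is
`v` (equivalently, whose least element is `v`). -/
def IsOrnamentHungAt {V : Type*} [PartialOrder V] (v : V) (S : Set V) : Prop :=
  v ∈ S ∧ (∀ x ∈ S, v ≤ x) ∧ ((hasseGraph V).induce S).Connected

/-- An ornamentation of the forest poset `V`: a function assigning to each `v` an
ornament hung at `v`, such that any two assigned ornaments are nested or disjoint. -/
def IsOrnamentation {V : Type*} [PartialOrder V] (ρ : V → Set V) : Prop :=
  (∀ v : V, IsOrnamentHungAt v (ρ v)) ∧
    ∀ v w : V, ρ v ⊆ ρ w ∨ ρ w ⊆ ρ v ∨ Disjoint (ρ v) (ρ w)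

section Aux

variable {V : Type*} [Fintype V] [PartialOrder V]

/-- In a forest poset the elements below a fixed element form a chain. -/
lemma forest_chainBelow (hforest : ∀ x a b : V, a ⋖ x → b ⋖ x → a = b) :
    ∀ x a b : V, a < x → b < x → a ≤ b ∨ b ≤ a := by
  intro x
  induction x using WellFoundedLT.induction with
  | ind x ih =>
    intro a b ha hb
    obtain ⟨ca, hca, hcax⟩ := exists_le_covBy_of_lt ha
    obtain ⟨cb, hcb, hcbx⟩ := exists_le_covBy_of_lt hb
    have hc : ca = cb := hforest x ca cb hcax hcbx
    subst hc
    rcases eq_or_lt_of_le hca with rfl | ha'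
    · exact Or.inr hcb
    rcases eq_or_lt_of_le hcb with rfl | hb'
    · exact Or.inl hca
    exact ih ca hcax.lt a b ha' hb'

/-- An ornament hung at `v` contains every interval `[v, x]` with `x` in it. -/
lemma ornament_interval (hforest : ∀ x a b : V, a ⋖ x → b ⋖ x → a = b)
    {S : Set V} {v : V} (hS : IsOrnamentHungAt v S) :
    ∀ x ∈ S, ∀ w, v ≤ w → w ≤ x → w ∈ S := by
  obtain ⟨hvS, hleast, hconn⟩ := hS
  have key : ∀ (x y : S) (_ : ((hasseGraph V).induce S).Walk x y)
      (w : V), (y : V) ≤ w → w ≤ (x : V) → w ∈ S := by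
    intro x y p
    induction p with
    | nil =>
      rename_i z
      intro w h1 h2
      have : w = (z : V) := le_antisymm h2 h1
      exact this ▸ z.2
    | @cons x y _ h p ih =>
      intro w h1 h2
      rcases eq_or_lt_of_le h2 with rfl | h2'
      · exact x.2
      rcases (show (x : V) ⋖ (y : V) ∨ (y : V) ⋖ (x : V) from h) with h | h
      · -- (x : V) ⋖ (y : V)
        exact ih w h1 (h2.trans h.le)
      · -- (y : V) ⋖ (x : V)
        rcases forest_chainBelow hforest (x : V) w (y : V) h2' h.lt with hw | hw
        · exact ih w h1 hw
        · rcases eq_or_lt_of_le hw with rfl | hw'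
          · exact y.2
          · exact absurd h2' (h.2 hw')
  intro x hx w h1 h2
  exact key ⟨x, hx⟩ ⟨v, hvS⟩ (hconn ⟨x, hx⟩ ⟨v, hvS⟩).some w h1 h2

lemma ornament_inter (hforest : ∀ x a b : V, a ⋖ x → b ⋖ x → a = b)
    {S T : Set V} {v : V} (hS : IsOrnamentHungAt v S) (hT : IsOrnamentHungAt v T) :
    IsOrnamentHungAt v (S ∩ T) := by
  have hvA : v ∈ S ∩ T := ⟨hS.1, hT.1⟩
  refine ⟨hvA, fun x hx => hS.2.1 x hx.1, ?_⟩
  have reach : ∀ x, ∀ hx : x ∈ S ∩ T,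
      ((hasseGraph V).induce (S ∩ T)).Reachable ⟨x, hx⟩ ⟨v, hvA⟩ := by
    intro x
    induction x using WellFoundedLT.induction with
    | ind x ih =>
      intro hx
      rcases eq_or_lt_of_le (hS.2.1 x hx.1) with rfl | hlt
      · exact SimpleGraph.Reachable.refl _
      · obtain ⟨c, hvc, hcx⟩ := exists_le_covBy_of_lt hlt
        have hcA : c ∈ S ∩ T :=
          ⟨ornament_interval hforest hS x hx.1 c hvc hcx.le,
           ornament_interval hforest hT x hx.2 c hvc hcx.le⟩
        have hadj : ((hasseGraph V).induce (S ∩ T)).Adj ⟨x, hx⟩ ⟨c, hcA⟩ :=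
          (Or.inr hcx : x ⋖ c ∨ c ⋖ x)
        exact hadj.reachable.trans (ih c hcx.lt hcA)
  haveI : Nonempty ↑(S ∩ T) := ⟨⟨v, hvA⟩⟩
  refine ⟨fun a b => ?_⟩
  exact (reach a.1 a.2).trans (reach b.1 b.2).symm

end Aux

/-- Let `V` be a finite forest poset (each element covers at most one element). The
pointwise intersection of two ornamentations of `V` is an ornamentation. -/
theorem stmt12 {V : Type*} [Fintype V] [PartialOrder V]
    (hforest : ∀ x a b : V, a ⋖ x → b ⋖ x → a = b)
    (ρ σ : V → Set V) (hρ : IsOrnamentation ρ) (hσ : IsOrnamentation σ) :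
    IsOrnamentation (fun v => ρ v ∩ σ v) := by
  constructor
  · intro v
    exact ornament_inter hforest (hρ.1 v) (hσ.1 v)
  · intro v w
    rcases hρ.2 v w with hr | hr | hr
    · rcases hσ.2 v w with hs | hs | hs
      · exact Or.inl (Set.inter_subset_inter hr hs)
      · -- ρ v ⊆ ρ w, σ w ⊆ σ v : then v = w
        have h1 : w ≤ v := ((hρ.1 w).2.1) v (hr (hρ.1 v).1)
        have h2 : v ≤ w := ((hσ.1 v).2.1) w (hs (hσ.1 w).1)
        have : v = w := le_antisymm h2 h1
        subst this
        exact Or.inl subset_rfl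
      · exact Or.inr (Or.inr (hs.mono Set.inter_subset_right Set.inter_subset_right))
    · rcases hσ.2 v w with hs | hs | hs
      · have h1 : v ≤ w := ((hρ.1 v).2.1) w (hr (hρ.1 w).1)
        have h2 : w ≤ v := ((hσ.1 w).2.1) v (hs (hσ.1 v).1)
        have : v = w := le_antisymm h1 h2
        subst this
        exact Or.inl subset_rfl
      · exact Or.inr (Or.inl (Set.inter_subset_inter hr hs))
      · exact Or.inr (Or.inr (hs.mono Set.inter_subset_right Set.inter_subset_right))
    · exact Or.inr (Or.inr (hr.mono Set.inter_subset_left Set.inter_subset_left))
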